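/- Let a : ℕ → ℂ be a sequence for which there exist constants c, d ≥ 0 with ‖a n‖ ≤ c · n^d for all n ≥ 1, and for z in the upper half-plane ℍ set g(z) = Σ_{n=1}^∞ a(n) e^{2πi n z}. Then for every real w > 1 and every τ ∈ ℍ, ∫_0^∞ g(τ + i s) · s^{w−2} ds = Γ(w − 1) · (2π)^{1−w} · Σ_{n=1}^∞ a(n) · n^{1−w} · e^{2πi n τ}, with the integral and the series absolutely convergent. -/

import Mathlib

open Complex MeasureTheory

private lemma aux_summable_poly_exp {c d : ℝ} (hc : 0 ≤ c) (hd : 0 ≤ d) {ε : ℝ} (hε : 0 < ε) :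
    Summable (fun n : ℕ => c * ((n : ℝ) + 1) ^ d * Real.exp (-(((n : ℝ) + 1) * ε))) := by
  set r := Real.exp (-ε) with hr
  have hr0 : 0 < r := Real.exp_pos _
  have hr1 : r < 1 := by
    rw [hr, Real.exp_lt_one_iff]
    linarith
  set k := ⌈d⌉₊ with hk
  have hsum0 : Summable (fun n : ℕ => (n : ℝ) ^ k * r ^ n) :=
    summable_pow_mul_geometric_of_norm_lt_one k (by rwa [Real.norm_eq_abs, abs_of_pos hr0])
  have hsum : Summable (fun n : ℕ => ((n : ℝ) + 1) ^ k * r ^ (n + 1)) := by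
    have h2 := hsum0.comp_injective Nat.succ_injective
    refine h2.congr fun n => ?_
    simp only [Function.comp_apply, Nat.succ_eq_add_one]
    push_cast
    ring
  refine Summable.of_nonneg_of_le (fun n => by positivity) (fun n => ?_) (hsum.mul_left c)
  have hexp : Real.exp (-(((n : ℝ) + 1) * ε)) = r ^ (n + 1) := by
    rw [hr, ← Real.exp_nat_mul]
    congr 1
    push_cast
    ring
  have h1 : ((n : ℝ) + 1) ^ d ≤ ((n : ℝ) + 1) ^ (k : ℝ) := by
    refine Real.rpow_le_rpow_of_exponent_le (by linarith [(Nat.cast_nonneg n : (0:ℝ) ≤ (n:ℝ))]) (Nat.le_ceil d)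
  rw [hexp]
  calc c * ((n : ℝ) + 1) ^ d * r ^ (n + 1)
      ≤ c * ((n : ℝ) + 1) ^ (k : ℝ) * r ^ (n + 1) := by
        exact mul_le_mul_of_nonneg_right (mul_le_mul_of_nonneg_left h1 hc) (by positivity)
    _ = c * (((n : ℝ) + 1) ^ k * r ^ (n + 1)) := by
        rw [Real.rpow_natCast]; ring

theorem eichler_integral_eq_period_integral (a : ℕ → ℂ) (c d : ℝ)
    (hc : 0 ≤ c) (hd : 0 ≤ d)
    (ha : ∀ n : ℕ, 1 ≤ n → ‖a n‖ ≤ c * (n : ℝ) ^ d)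
    (w : ℝ) (hw : 1 < w) (τ : ℂ) (hτ : 0 < τ.im) :
    IntegrableOn
      (fun s : ℝ =>
        (∑' n : ℕ, a (n + 1) *
            Complex.exp (2 * Real.pi * Complex.I * ((n : ℂ) + 1) *
              (τ + Complex.I * s))) *
          ((s ^ (w - 2) : ℝ) : ℂ))
      (Set.Ioi 0) ∧
    (Summable fun n : ℕ =>
      ‖a (n + 1) * ((((n : ℝ) + 1) ^ (1 - w) : ℝ) : ℂ) *
        Complex.exp (2 * Real.pi * Complex.I * ((n : ℂ) + 1) * τ)‖) ∧
    ∫ s in Set.Ioi (0 : ℝ),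
        (∑' n : ℕ, a (n + 1) *
            Complex.exp (2 * Real.pi * Complex.I * ((n : ℂ) + 1) *
              (τ + Complex.I * s))) *
          ((s ^ (w - 2) : ℝ) : ℂ) =
      (Real.Gamma (w - 1) : ℂ) * (((2 * Real.pi) ^ (1 - w) : ℝ) : ℂ) *
        ∑' n : ℕ, a (n + 1) * ((((n : ℝ) + 1) ^ (1 - w) : ℝ) : ℂ) *
          Complex.exp (2 * Real.pi * Complex.I * ((n : ℂ) + 1) * τ) := by
  have hπ : (0 : ℝ) < Real.pi := Real.pi_pos
  have hw' : (0 : ℝ) < w - 1 := by linarith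
  -- the coefficient bound, shifted
  have ha' : ∀ n : ℕ, ‖a (n + 1)‖ ≤ c * ((n : ℝ) + 1) ^ d := by
    intro n
    have := ha (n + 1) (by omega)
    push_cast at this
    exact this
  -- the summable majorant
  set bnd : ℕ → ℝ := fun n => c * ((n : ℝ) + 1) ^ d *
      Real.exp (-(2 * Real.pi * ((n : ℝ) + 1) * τ.im)) with hbnd_def
  have hbnd_sum : Summable bnd := by
    have h := aux_summable_poly_exp hc hd (ε := 2 * Real.pi * τ.im) (by positivity)
    refine h.congr fun n => ?_
    rw [hbnd_def]
    congr 2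
    ring
  have hbnd_nonneg : ∀ n, 0 ≤ bnd n := fun n => by rw [hbnd_def]; positivity
  -- the real part of the exponent
  have hre : ∀ (n : ℕ) (t : ℝ),
      (2 * (Real.pi : ℂ) * Complex.I * ((n : ℂ) + 1) * (τ + Complex.I * (t : ℂ))).re
        = -(2 * Real.pi * ((n : ℝ) + 1) * (τ.im + t)) := by
    intro n t
    simp [Complex.mul_re, Complex.mul_im, Complex.I_re, Complex.I_im, Complex.add_re,
      Complex.add_im, Complex.ofReal_re, Complex.ofReal_im]
  have hreτ : ∀ n : ℕ,
      (2 * (Real.pi : ℂ) * Complex.I * ((n : ℂ) + 1) * τ).re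
        = -(2 * Real.pi * ((n : ℝ) + 1) * τ.im) := by
    intro n
    simp [Complex.mul_re, Complex.mul_im, Complex.I_re, Complex.I_im, Complex.ofReal_re,
      Complex.ofReal_im]
  -- norms of the terms
  have hnorm : ∀ (n : ℕ) (t : ℝ),
      ‖a (n + 1) * Complex.exp (2 * Real.pi * Complex.I * ((n : ℂ) + 1)
          * (τ + Complex.I * (t : ℂ)))‖
        = ‖a (n + 1)‖ * Real.exp (-(2 * Real.pi * ((n : ℝ) + 1) * (τ.im + t))) := by
    intro n t
    rw [norm_mul, Complex.norm_exp, hre]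
  have hnormA : ∀ n : ℕ,
      ‖a (n + 1) * Complex.exp (2 * Real.pi * Complex.I * ((n : ℂ) + 1) * τ)‖
        = ‖a (n + 1)‖ * Real.exp (-(2 * Real.pi * ((n : ℝ) + 1) * τ.im)) := by
    intro n
    rw [norm_mul, Complex.norm_exp, hreτ]
  -- term-by-term bound for t ≥ 0
  have hterm_le : ∀ (n : ℕ) (t : ℝ), 0 ≤ t →
      ‖a (n + 1) * Complex.exp (2 * Real.pi * Complex.I * ((n : ℂ) + 1)
          * (τ + Complex.I * (t : ℂ)))‖
        ≤ bnd n * Real.exp (-(2 * Real.pi * t)) := by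
    intro n t ht
    rw [hnorm n t]
    have hn0 : (0 : ℝ) ≤ (n : ℝ) := Nat.cast_nonneg n
    have h2 : Real.exp (-(2 * Real.pi * ((n : ℝ) + 1) * (τ.im + t)))
        ≤ Real.exp (-(2 * Real.pi * ((n : ℝ) + 1) * τ.im)) * Real.exp (-(2 * Real.pi * t)) := by
      rw [← Real.exp_add]
      apply Real.exp_le_exp.mpr
      nlinarith [mul_nonneg (mul_nonneg hπ.le hn0) ht]
    calc ‖a (n + 1)‖ * Real.exp (-(2 * Real.pi * ((n : ℝ) + 1) * (τ.im + t)))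
        ≤ (c * ((n : ℝ) + 1) ^ d) *
            (Real.exp (-(2 * Real.pi * ((n : ℝ) + 1) * τ.im)) * Real.exp (-(2 * Real.pi * t))) :=
          mul_le_mul (ha' n) h2 (Real.exp_pos _).le (by positivity)
      _ = bnd n * Real.exp (-(2 * Real.pi * t)) := by rw [hbnd_def]; ring
  -- summability of norms for each t ≥ 0
  have hsummable_norm : ∀ t : ℝ, 0 ≤ t →
      Summable (fun n : ℕ => ‖a (n + 1) * Complex.exp (2 * Real.pi * Complex.I * ((n : ℂ) + 1)
          * (τ + Complex.I * (t : ℂ)))‖) := by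
    intro t ht
    exact Summable.of_nonneg_of_le (fun n => norm_nonneg _) (fun n => hterm_le n t ht)
      (hbnd_sum.mul_right _)
  -- the key HasSum via hasSum_mellin
  have key := hasSum_mellin
    (a := fun n : ℕ => a (n + 1) * Complex.exp (2 * Real.pi * Complex.I * ((n : ℂ) + 1) * τ))
    (p := fun n : ℕ => 2 * Real.pi * ((n : ℝ) + 1))
    (F := fun t : ℝ => ∑' n : ℕ, a (n + 1) *
        Complex.exp (2 * Real.pi * Complex.I * ((n : ℂ) + 1) * (τ + Complex.I * (t : ℝ))))
    (s := (w : ℂ) - 1)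
    (fun n => Or.inr (by positivity))
    (by simp only [Complex.sub_re, Complex.ofReal_re, Complex.one_re]; linarith)
    (by
      intro t ht
      have hteq : (fun n : ℕ =>
          a (n + 1) * Complex.exp (2 * Real.pi * Complex.I * ((n : ℂ) + 1) * τ) *
            (Real.exp (-(2 * Real.pi * ((n : ℝ) + 1)) * t) : ℂ))
          = fun n : ℕ => a (n + 1) * Complex.exp (2 * Real.pi * Complex.I * ((n : ℂ) + 1)
              * (τ + Complex.I * (t : ℂ))) := by
        funext n
        rw [mul_assoc]
        congr 1
        rw [Complex.ofReal_exp, ← Complex.exp_add]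
        congr 1
        push_cast
        linear_combination (-(2 * (Real.pi : ℂ) * ((n : ℂ) + 1) * (t : ℂ))) * Complex.I_sq
      rw [hteq]
      exact ((hsummable_norm t (le_of_lt ht)).of_norm).hasSum)
    (by
      have hre2 : ((w : ℂ) - 1).re = w - 1 := by simp
      rw [hre2]
      refine Summable.of_nonneg_of_le (fun n => by positivity) (fun n => ?_)
        (hbnd_sum.div_const ((2 * Real.pi) ^ (w - 1)))
      rw [hnormA n]
      have hden : (2 * Real.pi) ^ (w - 1) ≤ (2 * Real.pi * ((n : ℝ) + 1)) ^ (w - 1) := by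
        apply Real.rpow_le_rpow (by positivity) _ hw'.le
        nlinarith [(Nat.cast_nonneg n : (0:ℝ) ≤ (n:ℝ))]
      have hnum : ‖a (n + 1)‖ * Real.exp (-(2 * Real.pi * ((n : ℝ) + 1) * τ.im)) ≤ bnd n := by
        rw [hbnd_def]
        exact mul_le_mul_of_nonneg_right (ha' n) (Real.exp_pos _).le
      exact div_le_div₀ (hbnd_nonneg n) hnum (Real.rpow_pos_of_pos (by positivity) _) hden)
  -- summability of the Dirichlet-type series (conjunct 2)
  have hsum2 : Summable fun n : ℕ =>
      ‖a (n + 1) * ((((n : ℝ) + 1) ^ (1 - w) : ℝ) : ℂ) *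
        Complex.exp (2 * Real.pi * Complex.I * ((n : ℂ) + 1) * τ)‖ := by
    refine Summable.of_nonneg_of_le (fun n => norm_nonneg _) (fun n => ?_) hbnd_sum
    rw [norm_mul, norm_mul, Complex.norm_exp, hreτ,
      Complex.norm_real, Real.norm_eq_abs,
      _root_.abs_of_nonneg (Real.rpow_nonneg (by positivity) _)]
    have h2 : ((n : ℝ) + 1) ^ (1 - w) ≤ 1 :=
      Real.rpow_le_one_of_one_le_of_nonpos (by linarith [(Nat.cast_nonneg n : (0:ℝ) ≤ (n:ℝ))]) (by linarith)
    calc ‖a (n + 1)‖ * ((n : ℝ) + 1) ^ (1 - w) *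
          Real.exp (-(2 * Real.pi * ((n : ℝ) + 1) * τ.im))
        ≤ (c * ((n : ℝ) + 1) ^ d) * 1 *
            Real.exp (-(2 * Real.pi * ((n : ℝ) + 1) * τ.im)) := by
          refine mul_le_mul_of_nonneg_right ?_ (Real.exp_pos _).le
          exact mul_le_mul (ha' n) h2 (Real.rpow_nonneg (by positivity) _) (by positivity)
      _ = bnd n := by rw [hbnd_def]; ring
  -- rewrite the conclusion of key
  have hf_eq : ∀ n : ℕ,
      Complex.Gamma ((w : ℂ) - 1) *
          (a (n + 1) * Complex.exp (2 * Real.pi * Complex.I * ((n : ℂ) + 1) * τ)) /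
          ((2 * Real.pi * ((n : ℝ) + 1) : ℝ) : ℂ) ^ ((w : ℂ) - 1)
        = (Real.Gamma (w - 1) : ℂ) * (((2 * Real.pi) ^ (1 - w) : ℝ) : ℂ) *
            (a (n + 1) * ((((n : ℝ) + 1) ^ (1 - w) : ℝ) : ℂ) *
              Complex.exp (2 * Real.pi * Complex.I * ((n : ℂ) + 1) * τ)) := by
    intro n
    have hX : (0 : ℝ) < (2 * Real.pi) ^ (w - 1) := Real.rpow_pos_of_pos (by positivity) _
    have hY : (0 : ℝ) < ((n : ℝ) + 1) ^ (w - 1) := Real.rpow_pos_of_pos (by positivity) _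
    have h2 : ((2 * Real.pi * ((n : ℝ) + 1) : ℝ) : ℂ) ^ ((w : ℂ) - 1)
        = ((((2 * Real.pi) ^ (w - 1) * ((n : ℝ) + 1) ^ (w - 1)) : ℝ) : ℂ) := by
      rw [show ((w : ℂ) - 1) = ((w - 1 : ℝ) : ℂ) by push_cast; ring,
        ← Complex.ofReal_cpow (by positivity),
        ← Real.mul_rpow (by positivity) (by positivity)]
    have h3 : ((2 * Real.pi) ^ (1 - w) : ℝ) = ((2 * Real.pi) ^ (w - 1))⁻¹ := by
      rw [show (1 - w) = -(w - 1) by ring, Real.rpow_neg (by positivity)]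
    have h4 : (((n : ℝ) + 1) ^ (1 - w) : ℝ) = (((n : ℝ) + 1) ^ (w - 1))⁻¹ := by
      rw [show (1 - w) = -(w - 1) by ring, Real.rpow_neg (by positivity)]
    rw [h2, h3, h4, show ((w : ℂ) - 1) = ((w - 1 : ℝ) : ℂ) by push_cast; ring,
      Complex.Gamma_ofReal]
    push_cast
    have hX' : ((((2 * Real.pi) ^ (w - 1) : ℝ)) : ℂ) ≠ 0 := Complex.ofReal_ne_zero.mpr hX.ne'
    have hY' : (((((n : ℝ) + 1) ^ (w - 1) : ℝ)) : ℂ) ≠ 0 := Complex.ofReal_ne_zero.mpr hY.ne'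
    field_simp
  simp only [hf_eq] at key
  -- the integral equals the Mellin transform
  have hmellin_eq : (∫ s in Set.Ioi (0 : ℝ),
        (∑' n : ℕ, a (n + 1) *
            Complex.exp (2 * Real.pi * Complex.I * ((n : ℂ) + 1) *
              (τ + Complex.I * s))) *
          ((s ^ (w - 2) : ℝ) : ℂ))
      = mellin (fun t : ℝ => ∑' n : ℕ, a (n + 1) *
          Complex.exp (2 * Real.pi * Complex.I * ((n : ℂ) + 1) * (τ + Complex.I * (t : ℝ))))
          ((w : ℂ) - 1) := by
    rw [mellin]
    refine setIntegral_congr_fun measurableSet_Ioi (fun t ht => ?_)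
    rw [smul_eq_mul, mul_comm]
    congr 1
    rw [show ((w : ℂ) - 1 - 1) = ((w - 2 : ℝ) : ℂ) by push_cast; ring,
      ← Complex.ofReal_cpow (le_of_lt ht)]
  -- integrability (conjunct 1)
  have hint : IntegrableOn
      (fun s : ℝ =>
        (∑' n : ℕ, a (n + 1) *
            Complex.exp (2 * Real.pi * Complex.I * ((n : ℂ) + 1) *
              (τ + Complex.I * s))) *
          ((s ^ (w - 2) : ℝ) : ℂ))
      (Set.Ioi 0) := by
    set K : ℝ := ∑' n, bnd n with hK
    have hK0 : 0 ≤ K := tsum_nonneg hbnd_nonneg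
    -- continuity of the series on Ici 0
    have hcont : ContinuousOn
        (fun t : ℝ => ∑' n : ℕ, a (n + 1) *
          Complex.exp (2 * Real.pi * Complex.I * ((n : ℂ) + 1) * (τ + Complex.I * (t : ℝ))))
        (Set.Ici 0) := by
      refine continuousOn_tsum (fun n => Continuous.continuousOn ?_) hbnd_sum
        (fun n t ht => ?_)
      · exact continuous_const.mul (Complex.continuous_exp.comp
          (continuous_const.mul (continuous_const.add
            (continuous_const.mul Complex.continuous_ofReal))))
      · calc ‖a (n + 1) * Complex.exp (2 * Real.pi * Complex.I * ((n : ℂ) + 1) *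
              (τ + Complex.I * (t : ℂ)))‖
            ≤ bnd n * Real.exp (-(2 * Real.pi * t)) := hterm_le n t ht
          _ ≤ bnd n * 1 := by
              refine mul_le_mul_of_nonneg_left ?_ (hbnd_nonneg n)
              exact Real.exp_le_one_iff.mpr (by nlinarith [mul_nonneg hπ.le ht])
          _ = bnd n := mul_one _
    -- measurability of the integrand
    have hmeas : AEStronglyMeasurable
        (fun s : ℝ =>
          (∑' n : ℕ, a (n + 1) *
              Complex.exp (2 * Real.pi * Complex.I * ((n : ℂ) + 1) *
                (τ + Complex.I * s))) *
            ((s ^ (w - 2) : ℝ) : ℂ))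
        (volume.restrict (Set.Ioi 0)) := by
      refine AEStronglyMeasurable.mul ?_ ?_
      · exact ((hcont.mono Set.Ioi_subset_Ici_self).aestronglyMeasurable measurableSet_Ioi)
      · have : ContinuousOn (fun t : ℝ => ((t ^ (w - 2) : ℝ) : ℂ)) (Set.Ioi 0) := by
          refine Complex.continuous_ofReal.comp_continuousOn (fun t ht => ?_)
          exact (Real.continuousAt_rpow_const t (w - 2) (Or.inl (ne_of_gt ht))).continuousWithinAt
        exact this.aestronglyMeasurable measurableSet_Ioi
    -- the dominating function
    have hdom : IntegrableOn
        (fun t : ℝ => K * (Real.exp (-(2 * Real.pi * t)) * t ^ (w - 2))) (Set.Ioi 0) := by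
      have h0 : IntegrableOn (fun x : ℝ => Real.exp (-x) * x ^ (w - 2)) (Set.Ioi 0) := by
        have := Real.GammaIntegral_convergent hw'
        simpa [show w - 1 - 1 = w - 2 by ring] using this
      have h1 : IntegrableOn
          (fun x : ℝ => Real.exp (-(2 * Real.pi * x)) * (2 * Real.pi * x) ^ (w - 2))
          (Set.Ioi 0) := by
        have h := integrableOn_Ioi_comp_mul_left_iff
          (fun x : ℝ => Real.exp (-x) * x ^ (w - 2)) 0 (by positivity : (0:ℝ) < 2 * Real.pi)
        rw [mul_zero] at h
        exact h.mpr h0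
      have h2 := (h1.const_mul (K * ((2 * Real.pi) ^ (w - 2))⁻¹))
      refine IntegrableOn.congr_fun h2 (fun t ht => ?_) measurableSet_Ioi
      have ht0 : (0 : ℝ) < t := ht
      rw [Real.mul_rpow (by positivity) ht0.le]
      have hne : ((2 * Real.pi) ^ (w - 2) : ℝ) ≠ 0 := (Real.rpow_pos_of_pos (by positivity) _).ne'
      field_simp
    refine Integrable.mono' hdom hmeas ?_
    filter_upwards [ae_restrict_mem measurableSet_Ioi] with t ht
    have ht0 : (0 : ℝ) < t := ht
    rw [norm_mul, Complex.norm_real, Real.norm_eq_abs,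
      _root_.abs_of_nonneg (Real.rpow_nonneg ht0.le _)]
    have hGle : ‖∑' n : ℕ, a (n + 1) *
        Complex.exp (2 * Real.pi * Complex.I * ((n : ℂ) + 1) * (τ + Complex.I * (t : ℝ)))‖
        ≤ K * Real.exp (-(2 * Real.pi * t)) := by
      calc ‖∑' n : ℕ, a (n + 1) *
            Complex.exp (2 * Real.pi * Complex.I * ((n : ℂ) + 1) * (τ + Complex.I * (t : ℝ)))‖
          ≤ ∑' n : ℕ, ‖a (n + 1) *
              Complex.exp (2 * Real.pi * Complex.I * ((n : ℂ) + 1) * (τ + Complex.I * (t : ℝ)))‖ :=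
            norm_tsum_le_tsum_norm (hsummable_norm t ht0.le)
        _ ≤ ∑' n : ℕ, bnd n * Real.exp (-(2 * Real.pi * t)) :=
            Summable.tsum_le_tsum (fun n => hterm_le n t ht0.le) (hsummable_norm t ht0.le)
              (hbnd_sum.mul_right _)
        _ = K * Real.exp (-(2 * Real.pi * t)) := by rw [tsum_mul_right]
    calc ‖∑' n : ℕ, a (n + 1) *
          Complex.exp (2 * Real.pi * Complex.I * ((n : ℂ) + 1) * (τ + Complex.I * (t : ℝ)))‖
          * t ^ (w - 2)
        ≤ (K * Real.exp (-(2 * Real.pi * t))) * t ^ (w - 2) :=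
          mul_le_mul_of_nonneg_right hGle (Real.rpow_nonneg ht0.le _)
      _ = K * (Real.exp (-(2 * Real.pi * t)) * t ^ (w - 2)) := by ring
  refine ⟨hint, hsum2, ?_⟩
  rw [hmellin_eq, ← key.tsum_eq]
  exact tsum_mul_left
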